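/- Let M = (λI−A)⁻¹ with eigenvalues βᵢ and eigenvectors pᵢ, w_{t−1} a unit vector with coordinates ξᵢ = w_{t−1}⊤pᵢ, w̃* = M w_{t−1}, and let w̃ satisfy ½‖w̃ − w̃*‖²_{M⁻¹} ≤ ε_t. Define G(u) = √(Σ_{i≥2}(u⊤pᵢ)²/βᵢ)/√((u⊤p₁)²/β₁) for u ≠ 0 with u⊤p₁ ≠ 0. If √(2ε_t) ≤ min(√(Σ_{i≥2}ξᵢ²/βᵢ), √(ξ₁²/β₁))·(β₁−β₂)/4, then G(w̃/‖w̃‖) ≤ ((β₁+3β₂)/(3β₁+β₂)) · G(w_{t−1}). -/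

import Mathlib

open Matrix Finset

lemma minkowski' {ι : Type*} (s : Finset ι) (f g : ι → ℝ) :
    Real.sqrt (∑ i ∈ s, (f i + g i)^2) ≤
      Real.sqrt (∑ i ∈ s, f i^2) + Real.sqrt (∑ i ∈ s, g i^2) := by
  have hf : (0:ℝ) ≤ ∑ i ∈ s, f i^2 := Finset.sum_nonneg fun i _ => sq_nonneg _
  have hg : (0:ℝ) ≤ ∑ i ∈ s, g i^2 := Finset.sum_nonneg fun i _ => sq_nonneg _
  have cs := Real.sum_mul_le_sqrt_mul_sqrt s f g
  have key : ∑ i ∈ s, (f i + g i)^2 ≤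
      (Real.sqrt (∑ i ∈ s, f i^2) + Real.sqrt (∑ i ∈ s, g i^2))^2 := by
    have e1 : Real.sqrt (∑ i ∈ s, f i^2)^2 = ∑ i ∈ s, f i^2 := Real.sq_sqrt hf
    have e2 : Real.sqrt (∑ i ∈ s, g i^2)^2 = ∑ i ∈ s, g i^2 := Real.sq_sqrt hg
    have expand : ∑ i ∈ s, (f i + g i)^2
        = (∑ i ∈ s, f i^2) + 2 * (∑ i ∈ s, f i * g i) + ∑ i ∈ s, g i^2 := by
      rw [Finset.mul_sum, ← Finset.sum_add_distrib, ← Finset.sum_add_distrib]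
      exact Finset.sum_congr rfl fun i _ => by ring
    nlinarith [cs]
  calc Real.sqrt (∑ i ∈ s, (f i + g i)^2)
      ≤ Real.sqrt ((Real.sqrt (∑ i ∈ s, f i^2) + Real.sqrt (∑ i ∈ s, g i^2))^2) :=
        Real.sqrt_le_sqrt key
    _ = _ := Real.sqrt_sq (by positivity)

lemma quadform_inv {d : ℕ} (M : Matrix (Fin d) (Fin d) ℝ)
    (β : Fin d → ℝ) (p : Fin d → (Fin d → ℝ))
    (hβ : ∀ i, β i ≠ 0)
    (h_orth : ∀ i j : Fin d, p i ⬝ᵥ p j = if i = j then 1 else 0)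
    (h_eig : ∀ i, M.mulVec (p i) = β i • p i)
    (e : Fin d → ℝ) :
    e ⬝ᵥ M⁻¹.mulVec e = ∑ i, (e ⬝ᵥ p i)^2 / β i := by
  set P : Matrix (Fin d) (Fin d) ℝ := Matrix.of (fun i j => p i j) with hP
  have hPPT : P * Pᵀ = 1 := by
    ext i j
    simpa [Matrix.mul_apply, Matrix.one_apply, dotProduct, hP] using h_orth i j
  have hPTP : Pᵀ * P = 1 := mul_eq_one_comm.mp hPPT
  have hMPT : M * Pᵀ = Pᵀ * Matrix.diagonal β := by
    ext i j
    have h := congrFun (h_eig j) i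
    simp only [Matrix.mulVec, dotProduct, Pi.smul_apply, smul_eq_mul] at h
    simp [Matrix.mul_apply, Matrix.diagonal, hP, h, mul_comm]
  have hMN : M * (Pᵀ * Matrix.diagonal (fun i => (β i)⁻¹) * P) = 1 := by
    calc M * (Pᵀ * Matrix.diagonal (fun i => (β i)⁻¹) * P)
        = (M * Pᵀ) * Matrix.diagonal (fun i => (β i)⁻¹) * P := by
          simp only [Matrix.mul_assoc]
      _ = Pᵀ * (Matrix.diagonal β * Matrix.diagonal (fun i => (β i)⁻¹)) * P := by
          rw [hMPT]; simp only [Matrix.mul_assoc]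
      _ = 1 := by
          rw [Matrix.diagonal_mul_diagonal]
          have : (fun i => β i * (β i)⁻¹) = fun _ => (1:ℝ) := by
            funext i; exact mul_inv_cancel₀ (hβ i)
          rw [this, Matrix.diagonal_one, Matrix.mul_one, hPTP]
  have hinv : M⁻¹ = Pᵀ * Matrix.diagonal (fun i => (β i)⁻¹) * P :=
    Matrix.inv_eq_right_inv hMN
  rw [hinv]
  rw [Matrix.mul_assoc, ← Matrix.mulVec_mulVec, Matrix.dotProduct_mulVec,
    Matrix.vecMul_transpose, ← Matrix.mulVec_mulVec]
  have hPe : P.mulVec e = fun i => e ⬝ᵥ p i := by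
    funext i
    simp [Matrix.mulVec, dotProduct, hP, mul_comm]
  rw [hPe]
  simp only [dotProduct, Matrix.mulVec_diagonal]
  exact Finset.sum_congr rfl fun i _ => by field_simp

/-- One step of inexact shift-and-invert power iteration contracts the potential
`G(u) = √(∑_{i≥2} (uᵀpᵢ)²/βᵢ) / √((uᵀp₁)²/β₁)` by a factor
`(β₁ + 3β₂)/(3β₁ + β₂)`, provided the least-squares error `ε_t` is small enough. -/
theorem stmt15 {d : ℕ} (hd : 1 < d) (M : Matrix (Fin d) (Fin d) ℝ) (hM : M.IsSymm)
    (β : Fin d → ℝ) (p : Fin d → (Fin d → ℝ))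
    (hβ_pos : ∀ i, 0 < β i)
    (hβ_mono : ∀ i j : Fin d, i ≤ j → β j ≤ β i)
    (hβ_gap : β ⟨1, hd⟩ < β ⟨0, Nat.lt_of_succ_lt hd⟩)
    (h_orth : ∀ i j : Fin d, p i ⬝ᵥ p j = if i = j then 1 else 0)
    (h_eig : ∀ i, M.mulVec (p i) = β i • p i)
    (w : Fin d → ℝ) (hw : w ⬝ᵥ w = 1)
    (ξ : Fin d → ℝ) (hξ : ∀ i, ξ i = w ⬝ᵥ p i)
    (hξ1 : ξ ⟨0, Nat.lt_of_succ_lt hd⟩ ≠ 0)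
    (G : (Fin d → ℝ) → ℝ)
    (hG : ∀ u : Fin d → ℝ, G u =
      Real.sqrt (∑ i ∈ Finset.univ \ {(⟨0, Nat.lt_of_succ_lt hd⟩ : Fin d)},
          (u ⬝ᵥ p i) ^ 2 / β i)
        / Real.sqrt ((u ⬝ᵥ p ⟨0, Nat.lt_of_succ_lt hd⟩) ^ 2 / β ⟨0, Nat.lt_of_succ_lt hd⟩))
    (εt : ℝ) (hεt : 0 ≤ εt)
    (wtilde : Fin d → ℝ)
    (herr : (1 / 2) * ((wtilde - M.mulVec w) ⬝ᵥ M⁻¹.mulVec (wtilde - M.mulVec w)) ≤ εt)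
    (hsmall : Real.sqrt (2 * εt) ≤
      min (Real.sqrt (∑ i ∈ Finset.univ \ {(⟨0, Nat.lt_of_succ_lt hd⟩ : Fin d)},
              ξ i ^ 2 / β i))
          (Real.sqrt (ξ ⟨0, Nat.lt_of_succ_lt hd⟩ ^ 2 / β ⟨0, Nat.lt_of_succ_lt hd⟩))
        * ((β ⟨0, Nat.lt_of_succ_lt hd⟩ - β ⟨1, hd⟩) / 4)) :
    G ((Real.sqrt (wtilde ⬝ᵥ wtilde))⁻¹ • wtilde)
      ≤ ((β ⟨0, Nat.lt_of_succ_lt hd⟩ + 3 * β ⟨1, hd⟩)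
          / (3 * β ⟨0, Nat.lt_of_succ_lt hd⟩ + β ⟨1, hd⟩)) * G w := by
  set i0 : Fin d := ⟨0, Nat.lt_of_succ_lt hd⟩ with hi0
  set i1 : Fin d := ⟨1, hd⟩ with hi1
  set β1 : ℝ := β i0 with hβ1
  set β2 : ℝ := β i1 with hβ2
  have hβ1pos : 0 < β1 := hβ_pos i0
  have hβ2pos : 0 < β2 := hβ_pos i1
  set e : Fin d → ℝ := wtilde - M.mulVec w with he
  set η : Fin d → ℝ := fun i => e ⬝ᵥ p i with hη
  set s : Finset (Fin d) := Finset.univ \ {i0} with hs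
  set S : ℝ := Real.sqrt (∑ i ∈ s, ξ i ^ 2 / β i) with hS
  set F : ℝ := Real.sqrt (ξ i0 ^ 2 / β i0) with hF
  have hSnn : 0 ≤ S := Real.sqrt_nonneg _
  have hξsq : 0 < ξ i0 ^ 2 := lt_of_le_of_ne (sq_nonneg _) (Ne.symm (pow_ne_zero 2 hξ1))
  have hFpos : 0 < F := Real.sqrt_pos.mpr (div_pos hξsq (hβ_pos i0))
  -- error bound
  have hE : ∑ i, η i ^ 2 / β i ≤ 2 * εt := by
    have h2 := quadform_inv M β p (fun i => (hβ_pos i).ne') h_orth h_eig e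
    simp only [hη]
    rw [← h2]
    linarith
  have hEnn : ∀ i, 0 ≤ η i ^ 2 / β i := fun i => div_nonneg (sq_nonneg _) (hβ_pos i).le
  have hsqrtE : ∀ i, Real.sqrt (η i ^ 2 / β i) ≤ Real.sqrt (2 * εt) := by
    intro i
    apply Real.sqrt_le_sqrt
    calc η i ^ 2 / β i ≤ ∑ j, η j ^ 2 / β j :=
          Finset.single_le_sum (fun j _ => hEnn j) (Finset.mem_univ i)
      _ ≤ 2 * εt := hE
  -- coordinates of wtilde
  have hMw : ∀ i, (M.mulVec w) ⬝ᵥ p i = β i * ξ i := by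
    intro i
    rw [dotProduct_comm, Matrix.dotProduct_mulVec, ← Matrix.mulVec_transpose,
      hM.eq, h_eig i, smul_dotProduct, smul_eq_mul, dotProduct_comm, ← hξ]
  have ha : ∀ i, wtilde ⬝ᵥ p i = β i * ξ i + η i := by
    intro i
    have hwt : wtilde = M.mulVec w + e := by rw [he]; abel
    rw [hwt, add_dotProduct, hMw, hη]
  -- small-error consequences
  have hgap4 : (0:ℝ) ≤ (β1 - β2) / 4 := by linarith [hβ_gap]
  have hsmall' : Real.sqrt (2 * εt) ≤ min S F * ((β1 - β2) / 4) := hsmall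
  have hsmallS : Real.sqrt (2 * εt) ≤ S * ((β1 - β2) / 4) :=
    hsmall'.trans (mul_le_mul_of_nonneg_right (min_le_left _ _) hgap4)
  have hsmallF : Real.sqrt (2 * εt) ≤ F * ((β1 - β2) / 4) :=
    hsmall'.trans (mul_le_mul_of_nonneg_right (min_le_right _ _) hgap4)
  -- numerator bound
  set N : ℝ := ∑ i ∈ s, (wtilde ⬝ᵥ p i) ^ 2 / β i with hN
  set D : ℝ := (wtilde ⬝ᵥ p i0) ^ 2 / β i0 with hD
  have hNnn : 0 ≤ N := Finset.sum_nonneg fun i _ => div_nonneg (sq_nonneg _) (hβ_pos i).le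
  set f : Fin d → ℝ := fun i => β i * ξ i / Real.sqrt (β i) with hf
  set g : Fin d → ℝ := fun i => η i / Real.sqrt (β i) with hg
  have hterm : ∀ i : Fin d, (wtilde ⬝ᵥ p i) ^ 2 / β i = (f i + g i) ^ 2 := by
    intro i
    rw [ha i, hf, hg]
    rw [← add_div, div_pow, Real.sq_sqrt (hβ_pos i).le]
  have hNeq : N = ∑ i ∈ s, (f i + g i) ^ 2 :=
    Finset.sum_congr rfl fun i _ => hterm i
  have hfsq : ∀ i : Fin d, f i ^ 2 = β i ^ 2 * (ξ i ^ 2 / β i) := by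
    intro i
    rw [hf]
    rw [div_pow, Real.sq_sqrt (hβ_pos i).le]
    field_simp
  have hgsq : ∀ i : Fin d, g i ^ 2 = η i ^ 2 / β i := by
    intro i
    rw [hg, div_pow, Real.sq_sqrt (hβ_pos i).le]
  have hβle : ∀ i ∈ s, β i ≤ β2 := by
    intro i hi
    rw [hs, Finset.mem_sdiff, Finset.mem_singleton] at hi
    apply hβ_mono i1 i
    have hne : (i : Fin d).val ≠ 0 := fun h => hi.2 (Fin.ext h)
    exact Fin.mk_le_of_le_val (by omega)
  have hfsum : Real.sqrt (∑ i ∈ s, f i ^ 2) ≤ β2 * S := by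
    have h1 : ∑ i ∈ s, f i ^ 2 ≤ β2 ^ 2 * ∑ i ∈ s, ξ i ^ 2 / β i := by
      rw [Finset.mul_sum]
      apply Finset.sum_le_sum
      intro i hi
      rw [hfsq i]
      apply mul_le_mul_of_nonneg_right _ (div_nonneg (sq_nonneg _) (hβ_pos i).le)
      exact pow_le_pow_left₀ (hβ_pos i).le (hβle i hi) 2
    calc Real.sqrt (∑ i ∈ s, f i ^ 2) ≤ Real.sqrt (β2 ^ 2 * ∑ i ∈ s, ξ i ^ 2 / β i) :=
          Real.sqrt_le_sqrt h1
      _ = β2 * S := by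
          rw [Real.sqrt_mul (sq_nonneg β2), Real.sqrt_sq hβ2pos.le, hS]
  have hgsum : Real.sqrt (∑ i ∈ s, g i ^ 2) ≤ S * ((β1 - β2) / 4) := by
    have h1 : ∑ i ∈ s, g i ^ 2 ≤ 2 * εt := by
      calc ∑ i ∈ s, g i ^ 2 = ∑ i ∈ s, η i ^ 2 / β i :=
            Finset.sum_congr rfl fun i _ => hgsq i
        _ ≤ ∑ i, η i ^ 2 / β i :=
            Finset.sum_le_sum_of_subset_of_nonneg (Finset.subset_univ s)
              (fun i _ _ => hEnn i)
        _ ≤ 2 * εt := hE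
    exact (Real.sqrt_le_sqrt h1).trans hsmallS
  have hNum : Real.sqrt N ≤ (β1 + 3 * β2) / 4 * S := by
    calc Real.sqrt N ≤ Real.sqrt (∑ i ∈ s, f i ^ 2) + Real.sqrt (∑ i ∈ s, g i ^ 2) := by
          rw [hNeq]; exact minkowski' s f g
      _ ≤ β2 * S + S * ((β1 - β2) / 4) := add_le_add hfsum hgsum
      _ = (β1 + 3 * β2) / 4 * S := by ring
  -- denominator bound
  have hFabs : F = |ξ i0| / Real.sqrt β1 := by
    rw [hF, Real.sqrt_div (sq_nonneg _), Real.sqrt_sq_eq_abs, hβ1]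
  have hsβ1 : 0 < Real.sqrt β1 := Real.sqrt_pos.mpr hβ1pos
  have hDabs : Real.sqrt D = |wtilde ⬝ᵥ p i0| / Real.sqrt β1 := by
    rw [hD, Real.sqrt_div (sq_nonneg _), Real.sqrt_sq_eq_abs, hβ1]
  have hη0' : |η i0| / Real.sqrt β1 ≤ F * ((β1 - β2) / 4) := by
    have hη0 : Real.sqrt (η i0 ^ 2 / β i0) ≤ F * ((β1 - β2) / 4) :=
      (hsqrtE i0).trans hsmallF
    rw [hβ1, ← Real.sqrt_sq_eq_abs, ← Real.sqrt_div (sq_nonneg _)]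
    exact hη0
  have hDen : (3 * β1 + β2) / 4 * F ≤ Real.sqrt D := by
    have habs : β1 * |ξ i0| - |η i0| ≤ |wtilde ⬝ᵥ p i0| := by
      have h2 : wtilde ⬝ᵥ p i0 = β1 * ξ i0 + η i0 := by rw [ha i0, ← hβ1]
      have h3 : |β1 * ξ i0| ≤ |wtilde ⬝ᵥ p i0| + |η i0| := by
        calc |β1 * ξ i0| = |(β1 * ξ i0 + η i0) + (-η i0)| := by ring_nf
          _ ≤ |β1 * ξ i0 + η i0| + |(-η i0)| := abs_add_le _ _
          _ = |wtilde ⬝ᵥ p i0| + |η i0| := by rw [← h2, abs_neg]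
      rw [abs_mul, abs_of_pos hβ1pos] at h3
      linarith
    have step1 : (3 * β1 + β2) / 4 * F ≤ β1 * F - |η i0| / Real.sqrt β1 := by
      have : F * ((β1 - β2) / 4) + (3 * β1 + β2) / 4 * F = β1 * F := by ring
      linarith [hη0']
    have step2 : β1 * F - |η i0| / Real.sqrt β1
        = (β1 * |ξ i0| - |η i0|) / Real.sqrt β1 := by
      rw [hFabs]
      field_simp
    have step3 : (β1 * |ξ i0| - |η i0|) / Real.sqrt β1
        ≤ |wtilde ⬝ᵥ p i0| / Real.sqrt β1 :=
      by gcongr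
    calc (3 * β1 + β2) / 4 * F ≤ β1 * F - |η i0| / Real.sqrt β1 := step1
      _ = (β1 * |ξ i0| - |η i0|) / Real.sqrt β1 := step2
      _ ≤ |wtilde ⬝ᵥ p i0| / Real.sqrt β1 := step3
      _ = Real.sqrt D := hDabs.symm
  have hDenpos : 0 < (3 * β1 + β2) / 4 * F := by
    apply mul_pos _ hFpos
    linarith
  have hDpos : 0 < Real.sqrt D := lt_of_lt_of_le hDenpos hDen
  -- wtilde is nonzero
  have ha0 : wtilde ⬝ᵥ p i0 ≠ 0 := by
    intro h
    rw [hDabs, h, abs_zero, zero_div] at hDpos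
    exact lt_irrefl _ hDpos
  have hwne : wtilde ≠ 0 := by
    intro h
    exact ha0 (by rw [h, zero_dotProduct])
  have hwtpos : 0 < wtilde ⬝ᵥ wtilde := by
    have hnn : 0 ≤ wtilde ⬝ᵥ wtilde :=
      Finset.sum_nonneg fun i _ => mul_self_nonneg (wtilde i)
    rcases lt_or_eq_of_le hnn with h | h
    · exact h
    · exact absurd ((dotProduct_self_eq_zero).mp h.symm) hwne
  set c : ℝ := (Real.sqrt (wtilde ⬝ᵥ wtilde))⁻¹ with hc
  have hcpos : 0 < c := inv_pos.mpr (Real.sqrt_pos.mpr hwtpos)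
  -- scale invariance
  have hGscale : G (c • wtilde) = Real.sqrt N / Real.sqrt D := by
    rw [hG]
    simp only [smul_dotProduct, smul_eq_mul]
    have e1 : ∑ i ∈ s, (c * (wtilde ⬝ᵥ p i)) ^ 2 / β i = c ^ 2 * N := by
      rw [hN, Finset.mul_sum]
      exact Finset.sum_congr rfl fun i _ => by ring
    have e2 : (c * (wtilde ⬝ᵥ p i0)) ^ 2 / β1 = c ^ 2 * D := by
      rw [hD, hβ1]; ring
    rw [e1, e2, Real.sqrt_mul (sq_nonneg c), Real.sqrt_mul (sq_nonneg c),
      Real.sqrt_sq hcpos.le, mul_div_mul_left _ _ (ne_of_gt hcpos)]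
  have hGw : G w = S / F := by
    rw [hG, hβ1]
    simp only [← hξ]
    rfl
  rw [hGscale, hGw]
  have hfinal : Real.sqrt N / Real.sqrt D
      ≤ ((β1 + 3 * β2) / 4 * S) / ((3 * β1 + β2) / 4 * F) :=
    div_le_div₀ (mul_nonneg (by linarith) hSnn) hNum hDenpos hDen
  have heq : ((β1 + 3 * β2) / 4 * S) / ((3 * β1 + β2) / 4 * F)
      = (β1 + 3 * β2) / (3 * β1 + β2) * (S / F) := by
    have hB : (3 * β1 + β2) ≠ 0 := by linarith
    have hF0 : F ≠ 0 := ne_of_gt hFpos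
    field_simp
  rw [← heq]
  exact hfinal
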